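/- A set partition σ of [n] avoids the pattern 123/4 if and only if its RGF w has the form uv where every letter occurs at most twice in u, and v is a (possibly empty) terminal block consisting of repeated copies of a single letter (beginning at the third occurrence of that letter). -/

import Mathlib

/-- `w` is a restricted growth function: each letter is at least 1 and at most
one more than the maximum of the preceding letters (so the first letter is 1). -/
def IsRGF (w : List ℕ) : Prop :=
  ∀ i : Fin w.length, 1 ≤ w.get i ∧ w.get i ≤ ((w.take i.1).foldr max 0) + 1

/-- left-smaller statistic -/
def lsStat (w : List ℕ) : ℕ :=
  ∑ i : Fin w.length, ((w.take i.1).toFinset.filter (fun v => v < w.get i)).card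

/-- left-bigger statistic -/
def lbStat (w : List ℕ) : ℕ :=
  ∑ i : Fin w.length, ((w.take i.1).toFinset.filter (fun v => w.get i < v)).card

/-- right-smaller statistic -/
def rsStat (w : List ℕ) : ℕ :=
  ∑ i : Fin w.length, ((w.drop (i.1 + 1)).toFinset.filter (fun v => v < w.get i)).card

/-- right-bigger statistic -/
def rbStat (w : List ℕ) : ℕ :=
  ∑ i : Fin w.length, ((w.drop (i.1 + 1)).toFinset.filter (fun v => w.get i < v)).card

/-- The word `w` (viewed as a set partition via block indices) contains the
pattern given by the RGF `p`: some subsequence of `w` has the same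
same-block (equal-letter) relation as `p`. -/
def WContains (p w : List ℕ) : Prop :=
  ∃ f : Fin p.length → Fin w.length, StrictMono f ∧
    ∀ a b : Fin p.length, w.get (f a) = w.get (f b) ↔ p.get a = p.get b

section helpers


lemma two_le_count {l : List ℕ} {z : ℕ} {i j : Fin l.length} (hij : i < j)
    (hi : l.get i = z) (hj : l.get j = z) : 2 ≤ l.count z := by
  rw [← List.replicate_sublist_iff, List.sublist_iff_exists_fin_orderEmbedding_get_eq]
  have hsm : StrictMono (![i, j] : Fin 2 → Fin l.length) := by
    intro a b hab
    fin_cases a <;> fin_cases b <;> simp_all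
  exact ⟨OrderEmbedding.ofStrictMono (![i, j] : Fin 2 → Fin l.length) hsm,
    fun ix => by fin_cases ix <;> simp_all⟩

lemma three_le_count {l : List ℕ} {z : ℕ} {i j k : Fin l.length} (hij : i < j) (hjk : j < k)
    (hi : l.get i = z) (hj : l.get j = z) (hk : l.get k = z) : 3 ≤ l.count z := by
  rw [← List.replicate_sublist_iff, List.sublist_iff_exists_fin_orderEmbedding_get_eq]
  have hsm : StrictMono (![i, j, k] : Fin 3 → Fin l.length) := by
    intro a b hab
    fin_cases a <;> fin_cases b <;> simp_all <;> omega
  exact ⟨OrderEmbedding.ofStrictMono (![i, j, k] : Fin 3 → Fin l.length) hsm,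
    fun ix => by fin_cases ix <;> simp_all⟩

lemma exists_two {l : List ℕ} {z : ℕ} (h : 2 ≤ l.count z) :
    ∃ i j : Fin l.length, i < j ∧ l.get i = z ∧ l.get j = z := by
  rw [← List.replicate_sublist_iff, List.sublist_iff_exists_fin_orderEmbedding_get_eq] at h
  obtain ⟨f, hf⟩ := h
  refine ⟨f ⟨0, by simp⟩, f ⟨1, by simp⟩, f.strictMono (by simp), ?_, ?_⟩
  all_goals rw [← hf]; simp

lemma exists_three {l : List ℕ} {z : ℕ} (h : 3 ≤ l.count z) :
    ∃ i j k : Fin l.length, i < j ∧ j < k ∧ l.get i = z ∧ l.get j = z ∧ l.get k = z := by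
  rw [← List.replicate_sublist_iff, List.sublist_iff_exists_fin_orderEmbedding_get_eq] at h
  obtain ⟨f, hf⟩ := h
  refine ⟨f ⟨0, by simp⟩, f ⟨1, by simp⟩, f ⟨2, by simp⟩,
    f.strictMono (by simp), f.strictMono (by simp), ?_, ?_, ?_⟩
  all_goals rw [← hf]; simp

end helpers

lemma contains_of {w : List ℕ} {z : ℕ} {i j k m : Fin w.length} (hij : i < j) (hjk : j < k)
    (hkm : k < m) (hi : w.get i = z) (hj : w.get j = z) (hk : w.get k = z)
    (hm : w.get m ≠ z) : WContains [1, 1, 1, 2] w := by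
  refine ⟨![i, j, k, m], ?_, ?_⟩
  · intro a b hab
    fin_cases a <;> fin_cases b <;> simp_all <;> omega
  · intro a b
    fin_cases a <;> fin_cases b <;>
      simp_all [List.get_eq_getElem, show ((0:Fin 4):ℕ)=0 from rfl, show ((1:Fin 4):ℕ)=1 from rfl,
        show ((2:Fin 4):ℕ)=2 from rfl, show ((3:Fin 4):ℕ)=3 from rfl] <;>
      exact fun hh => hm hh.symm


theorem stmt9 (w : List ℕ) (hw : IsRGF w) :
    ¬ WContains [1, 1, 1, 2] w ↔
      ∃ u v : List ℕ, w = u ++ v ∧ (∀ i : ℕ, u.count i ≤ 2) ∧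
        ∃ z : ℕ, ∀ x ∈ v, x = z := by
  classical
  constructor
  · intro h
    by_cases hex : ∃ k, ∃ hk : k < w.length, 2 ≤ (w.take k).count (w.get ⟨k, hk⟩)
    · have key : ∃ k, (∃ hk : k < w.length, 2 ≤ (w.take k).count (w.get ⟨k, hk⟩)) ∧
          ∀ m < k, ¬ ∃ hm : m < w.length, 2 ≤ (w.take m).count (w.get ⟨m, hm⟩) :=
        ⟨Nat.find hex, Nat.find_spec hex, fun m hm => Nat.find_min hex hm⟩
      obtain ⟨k, ⟨hklt, hk2⟩, hmin⟩ := key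
      set z := w.get ⟨k, hklt⟩ with hzdef
      refine ⟨w.take k, w.drop k, (List.take_append_drop k w).symm, ?_, z, ?_⟩
      · intro c
        by_contra hc
        push_neg at hc
        obtain ⟨i, j, m, hij, hjm, hi, hj, hm⟩ := exists_three (show 3 ≤ (w.take k).count c by omega)
        have hij' : i.1 < j.1 := hij
        have hjm' : j.1 < m.1 := hjm
        have hmk : m.1 < k := by have := m.2; simp only [List.length_take] at this; omega
        have hmw : m.1 < w.length := lt_trans hmk hklt
        refine hmin m.1 hmk ⟨hmw, ?_⟩
        have hwm : w.get ⟨m.1, hmw⟩ = c := by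
          rw [← hm]; simp [List.get_eq_getElem, List.getElem_take]
        rw [hwm]
        have hik : i.1 < (w.take m.1).length := by simp only [List.length_take]; omega
        have hjk' : j.1 < (w.take m.1).length := by simp only [List.length_take]; omega
        refine two_le_count (i := ⟨i.1, hik⟩) (j := ⟨j.1, hjk'⟩) (Fin.mk_lt_mk.mpr hij') ?_ ?_
        · rw [← hi]; simp [List.get_eq_getElem, List.getElem_take]
        · rw [← hj]; simp [List.get_eq_getElem, List.getElem_take]
      · intro x hx
        obtain ⟨t, rfl⟩ := List.mem_iff_get.mp hx
        by_contra hne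
        have htw : k + t.1 < w.length := by
          have := t.2; simp only [List.length_drop] at this; omega
        have hxv : (w.drop k).get t = w.get ⟨k + t.1, htw⟩ := by
          simp [List.get_eq_getElem, List.getElem_drop]
        rcases Nat.eq_zero_or_pos t.1 with ht0 | htpos
        · exact hne (by rw [hxv, hzdef]; congr 2; omega)
        · obtain ⟨i, j, hij, hi, hj⟩ := exists_two hk2
          have hij' : i.1 < j.1 := hij
          have hjk2 : j.1 < k := by have := j.2; simp only [List.length_take] at this; omega
          have hjw : j.1 < w.length := lt_trans hjk2 hklt
          have hiw : i.1 < w.length := lt_trans (lt_trans hij' hjk2) hklt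
          have vi : w.get ⟨i.1, hiw⟩ = z := by
            rw [← hi]; simp [List.get_eq_getElem, List.getElem_take]
          have vj : w.get ⟨j.1, hjw⟩ = z := by
            rw [← hj]; simp [List.get_eq_getElem, List.getElem_take]
          refine h (contains_of (z := z) (i := ⟨i.1, hiw⟩) (j := ⟨j.1, hjw⟩)
            (k := ⟨k, hklt⟩) (m := ⟨k + t.1, htw⟩) (Fin.mk_lt_mk.mpr hij')
            (Fin.mk_lt_mk.mpr hjk2) (Fin.mk_lt_mk.mpr (by omega)) vi vj rfl ?_)
          rw [← hxv]; exact hne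
    · refine ⟨w, [], by simp, ?_, 0, by simp⟩
      intro c
      by_contra hc
      push_neg at hc
      obtain ⟨i, j, m, hij, hjm, hi, hj, hm⟩ := exists_three (show 3 ≤ w.count c by omega)
      have hij' : i.1 < j.1 := hij
      have hjm' : j.1 < m.1 := hjm
      refine hex ⟨m.1, m.2, ?_⟩
      rw [show w.get ⟨m.1, m.2⟩ = c from hm]
      have hik : i.1 < (w.take m.1).length := by
        simp only [List.length_take]; have := m.2; omega
      have hjk' : j.1 < (w.take m.1).length := by
        simp only [List.length_take]; have := m.2; omega
      refine two_le_count (i := ⟨i.1, hik⟩) (j := ⟨j.1, hjk'⟩) (Fin.mk_lt_mk.mpr hij') ?_ ?_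
      · rw [← hi]; simp [List.get_eq_getElem, List.getElem_take]
      · rw [← hj]; simp [List.get_eq_getElem, List.getElem_take]
  · rintro ⟨u, v, rfl, hcount, z, hv⟩ ⟨f, hmono, hiff⟩
    set a0 : Fin ([1, 1, 1, 2] : List ℕ).length := ⟨0, by norm_num⟩
    set a1 : Fin ([1, 1, 1, 2] : List ℕ).length := ⟨1, by norm_num⟩
    set a2 : Fin ([1, 1, 1, 2] : List ℕ).length := ⟨2, by norm_num⟩
    set a3 : Fin ([1, 1, 1, 2] : List ℕ).length := ⟨3, by norm_num⟩
    set c := (u ++ v).get (f a0) with hcdef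
    have h10 : (u ++ v).get (f a1) = c := (hiff a1 a0).mpr rfl
    have h20 : (u ++ v).get (f a2) = c := (hiff a2 a0).mpr rfl
    have h30 : (u ++ v).get (f a3) ≠ c := fun hh =>
      absurd ((hiff a3 a0).mp hh) (by decide)
    have h01 : f a0 < f a1 := hmono (show a0 < a1 by decide)
    have h12 : f a1 < f a2 := hmono (show a1 < a2 by decide)
    have h23 : f a2 < f a3 := hmono (show a2 < a3 by decide)
    have hu2 : u.length ≤ (f a2).1 := by
      by_contra hlt
      push_neg at hlt
      have h0 : (f a0).1 < u.length := lt_trans (lt_trans h01 h12) hlt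
      have h1 : (f a1).1 < u.length := lt_trans h12 hlt
      have h3 : 3 ≤ u.count c := by
        refine three_le_count (i := ⟨(f a0).1, h0⟩) (j := ⟨(f a1).1, h1⟩)
          (k := ⟨(f a2).1, hlt⟩) (Fin.mk_lt_mk.mpr h01) (Fin.mk_lt_mk.mpr h12) ?_ ?_ ?_
        · rw [hcdef]; simp [List.get_eq_getElem, List.getElem_append_left h0]
        · rw [← h10]; simp [List.get_eq_getElem, List.getElem_append_left h1]
        · rw [← h20]; simp [List.get_eq_getElem, List.getElem_append_left hlt]
      exact absurd (hcount c) (by omega)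
    have hvlen : ∀ n : Fin (u ++ v).length, u.length ≤ n.1 → (u ++ v).get n = z := by
      intro n hn
      have hnv : n.1 - u.length < v.length := by
        have := n.2; simp only [List.length_append] at this; omega
      have heq : (u ++ v).get n = v.get ⟨n.1 - u.length, hnv⟩ := by
        simp [List.get_eq_getElem, List.getElem_append_right hn]
      rw [heq]
      exact hv _ (List.get_mem v _)
    have hc2 : c = z := by rw [← h20]; exact hvlen _ hu2
    exact h30 (by rw [hvlen _ (le_trans hu2 (le_of_lt h23)), hc2])
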